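/- Let σ, γ > 0 and n̄ ∈ (0,1] with β·n̄ > γ. Then the largest root λ_SEIR(σ) = (−(σ+γ) + √((σ+γ)² + 4σ(β·n̄ − γ)))/2 is strictly increasing in σ on (0, ∞), and λ_SEIR(σ) → β·n̄ − γ as σ → ∞. -/

import Mathlib

open Set Real Filter

theorem seir_growth_monotone_in_sigma
    (β γ nbar : ℝ) (hγ : 0 < γ) (hn : 0 < nbar) (hn1 : nbar ≤ 1)
    (hsup : γ < β * nbar)
    (lamSEIR : ℝ → ℝ)
    (hlam : ∀ σ : ℝ, lamSEIR σ =
      (-(σ + γ) + Real.sqrt ((σ + γ) ^ 2 + 4 * σ * (β * nbar - γ))) / 2) :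
    StrictMonoOn lamSEIR (Ioi (0:ℝ)) ∧
    Tendsto lamSEIR atTop (nhds (β * nbar - γ)) := by
  have hfun : lamSEIR = fun σ : ℝ =>
      (-(σ + γ) + Real.sqrt ((σ + γ) ^ 2 + 4 * σ * (β * nbar - γ))) / 2 := funext hlam
  subst hfun
  set a : ℝ := β * nbar - γ with ha_def
  have ha : 0 < a := by simp [ha_def]; linarith
  -- derivative facts
  have hderiv : ∀ σ : ℝ, σ ∈ Ioi (0:ℝ) →
      HasDerivAt (fun σ : ℝ => (-(σ + γ) + Real.sqrt ((σ + γ) ^ 2 + 4 * σ * a)) / 2)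
        ((-1 + (2 * (σ + γ) + 4 * a) / (2 * Real.sqrt ((σ + γ) ^ 2 + 4 * σ * a))) / 2) σ := by
    intro σ hσ
    simp only [mem_Ioi] at hσ
    have hgpos : 0 < (σ + γ) ^ 2 + 4 * σ * a := by positivity
    have hg : HasDerivAt (fun σ : ℝ => (σ + γ) ^ 2 + 4 * σ * a) (2 * (σ + γ) + 4 * a) σ := by
      have h1 : HasDerivAt (fun σ : ℝ => (σ + γ) ^ 2) (2 * (σ + γ)) σ := by
        simpa using ((hasDerivAt_id σ).add_const γ).fun_pow 2
      have h2 : HasDerivAt (fun σ : ℝ => 4 * σ * a) (4 * a) σ := by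
        simpa using ((hasDerivAt_id σ).const_mul 4).mul_const a
      simpa using h1.fun_add h2
    have hsq : HasDerivAt (fun σ : ℝ => Real.sqrt ((σ + γ) ^ 2 + 4 * σ * a))
        ((2 * (σ + γ) + 4 * a) / (2 * Real.sqrt ((σ + γ) ^ 2 + 4 * σ * a))) σ :=
      hg.sqrt hgpos.ne'
    have hlin : HasDerivAt (fun σ : ℝ => -(σ + γ)) (-1) σ := by
      simpa using ((hasDerivAt_id σ).add_const γ).fun_neg
    simpa using (hlin.add hsq).div_const 2
  have hpos : ∀ σ : ℝ, σ ∈ Ioi (0:ℝ) →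
      0 < (-1 + (2 * (σ + γ) + 4 * a) / (2 * Real.sqrt ((σ + γ) ^ 2 + 4 * σ * a))) / 2 := by
    intro σ hσ
    simp only [mem_Ioi] at hσ
    have hgpos : 0 < (σ + γ) ^ 2 + 4 * σ * a := by positivity
    have hs : 0 < Real.sqrt ((σ + γ) ^ 2 + 4 * σ * a) := Real.sqrt_pos.mpr hgpos
    have hlt : Real.sqrt ((σ + γ) ^ 2 + 4 * σ * a) < (σ + γ) + 2 * a := by
      rw [Real.sqrt_lt' (by linarith)]
      nlinarith
    have : 1 < (2 * (σ + γ) + 4 * a) / (2 * Real.sqrt ((σ + γ) ^ 2 + 4 * σ * a)) := by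
      rw [lt_div_iff₀ (by linarith)]
      linarith
    linarith
  constructor
  · apply strictMonoOn_of_deriv_pos (convex_Ioi 0)
    · exact fun x hx => (hderiv x hx).continuousAt.continuousWithinAt
    · intro x hx
      rw [interior_Ioi] at hx
      rw [(hderiv x hx).deriv]
      exact hpos x hx
  · -- limit
    have key : ∀ σ : ℝ, 0 < σ →
        (-(σ + γ) + Real.sqrt ((σ + γ) ^ 2 + 4 * σ * a)) / 2 =
        2 * a / (1 + γ * σ⁻¹ + Real.sqrt ((1 + γ * σ⁻¹) ^ 2 + 4 * a * σ⁻¹)) := by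
      intro σ hσ
      have hgpos : 0 < (σ + γ) ^ 2 + 4 * σ * a := by positivity
      have hrw : (1 + γ * σ⁻¹) ^ 2 + 4 * a * σ⁻¹ =
          ((σ + γ) ^ 2 + 4 * σ * a) * (σ⁻¹) ^ 2 := by
        field_simp
      have hsqrt : Real.sqrt ((1 + γ * σ⁻¹) ^ 2 + 4 * a * σ⁻¹) =
          Real.sqrt ((σ + γ) ^ 2 + 4 * σ * a) * σ⁻¹ := by
        rw [hrw, Real.sqrt_mul hgpos.le, Real.sqrt_sq (by positivity)]
      rw [hsqrt]
      have hs : 0 < Real.sqrt ((σ + γ) ^ 2 + 4 * σ * a) := Real.sqrt_pos.mpr hgpos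
      have hsq : Real.sqrt ((σ + γ) ^ 2 + 4 * σ * a) ^ 2 = (σ + γ) ^ 2 + 4 * σ * a :=
        Real.sq_sqrt hgpos.le
      have hden : 1 + γ * σ⁻¹ + Real.sqrt ((σ + γ) ^ 2 + 4 * σ * a) * σ⁻¹ ≠ 0 := by
        positivity
      field_simp
      rw [show (σ + γ) ^ 2 + σ * 4 * a = (σ + γ) ^ 2 + 4 * σ * a by ring]
      nlinarith [hsq, hs, hσ]
    have h0 : Tendsto (fun σ : ℝ => σ⁻¹) atTop (nhds 0) := tendsto_inv_atTop_zero
    have hcont : ContinuousAt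
        (fun x : ℝ => 2 * a / (1 + γ * x + Real.sqrt ((1 + γ * x) ^ 2 + 4 * a * x))) 0 := by
      apply ContinuousAt.div
      · fun_prop
      · fun_prop
      · simp [Real.sqrt_one]
    have hval : 2 * a / (1 + γ * 0 + Real.sqrt ((1 + γ * 0) ^ 2 + 4 * a * 0)) = a := by
      norm_num
    have htend : Tendsto
        (fun σ : ℝ => 2 * a / (1 + γ * σ⁻¹ + Real.sqrt ((1 + γ * σ⁻¹) ^ 2 + 4 * a * σ⁻¹)))
        atTop (nhds a) := by
      have h := (hcont.tendsto).comp h0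
      rw [hval] at h
      exact h
    exact Tendsto.congr'
      (by filter_upwards [eventually_gt_atTop 0] with σ hσ using (key σ hσ).symm) htend
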